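/- Let V = ℓ²(ℤ∖{0}, ℝ) and let K ⊆ V be the set of all x with |x_n| ≤ 1/n and |x_{−n}| ≤ 1/n² for all integers n > 0. Then K is a compact convex subset of V, and the map T : K → K defined by (Tx)_n = n·x_{−n} and (Tx)_{−n} = x_n/n for n > 0 is a well-defined continuous involution of K which preserves convex combinations; yet there is no continuous linear operator on V whose restriction to K equals T. -/

import Mathlib

open scoped ENNReal

/-- The real Hilbert space `ℓ²(ℤ∖{0})`. -/
noncomputable abbrev V18 := lp (fun _ : {n : ℤ // n ≠ 0} => ℝ) 2

/-- The compact convex set `K` of all `x` with `|x_n| ≤ 1/n` and `|x_{−n}| ≤ 1/n²`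
for every integer `n > 0`. -/
def K18 : Set V18 :=
  {x : V18 | ∀ m : {n : ℤ // n ≠ 0},
    (0 < m.1 → |x m| ≤ 1 / (m.1 : ℝ)) ∧ (m.1 < 0 → |x m| ≤ 1 / (m.1 : ℝ) ^ 2)}

/-- `T` is the transformation of `K` given coordinatewise by `(Tx)_n = n·x_{−n}` and
`(Tx)_{−n} = x_n/n` for integers `n > 0`. -/
def IsT18 (T : K18 → K18) : Prop :=
  ∀ (x : K18) (n : {m : ℤ // m ≠ 0}), 0 < n.1 →
    (T x : V18) n = (n.1 : ℝ) * (x : V18) ⟨-n.1, neg_ne_zero.mpr n.2⟩ ∧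
    (T x : V18) ⟨-n.1, neg_ne_zero.mpr n.2⟩ = (x : V18) n / (n.1 : ℝ)

namespace Aux18

abbrev ι : Type := {n : ℤ // n ≠ 0}

lemma hp2 : 0 < (2 : ℝ≥0∞).toReal := by norm_num

lemma rpow2 (a : ℝ) : ‖a‖ ^ (2 : ℝ≥0∞).toReal = a ^ 2 := by
  rw [show (2 : ℝ≥0∞).toReal = ((2 : ℕ) : ℝ) by norm_num, Real.rpow_natCast]
  simp [Real.norm_eq_abs, sq_abs]

/-- dominating summable sequence -/
noncomputable def g : ι → ℝ := fun m => 1 / (m.1 : ℝ) ^ 2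

lemma g_nonneg (m : ι) : 0 ≤ g m := by unfold g; positivity

lemma g_summable : Summable g := by
  have h : Summable fun n : ℤ => 1 / (n : ℝ) ^ 2 :=
    Real.summable_one_div_int_pow.mpr one_lt_two
  exact h.subtype _

lemma one_le_sq (m : ι) : (1 : ℝ) ≤ (m.1 : ℝ) ^ 2 := by
  have h1 : (1 : ℤ) ≤ m.1 ^ 2 := by
    rcases lt_or_gt_of_ne m.2 with h | h <;> nlinarith
  calc (1 : ℝ) = ((1 : ℤ) : ℝ) := by norm_num
    _ ≤ ((m.1 ^ 2 : ℤ) : ℝ) := by exact_mod_cast h1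
    _ = (m.1 : ℝ) ^ 2 := by push_cast; ring

/-- the pointwise bounds defining `K18` -/
def KbP (f : ι → ℝ) : Prop :=
  ∀ m : ι, (0 < m.1 → |f m| ≤ 1 / (m.1 : ℝ)) ∧ (m.1 < 0 → |f m| ≤ 1 / (m.1 : ℝ) ^ 2)

lemma mem_K18_iff (x : V18) : x ∈ K18 ↔ KbP (⇑x) := Iff.rfl

lemma KbP.abs_le_one {f : ι → ℝ} (hf : KbP f) (m : ι) : |f m| ≤ 1 := by
  rcases lt_or_gt_of_ne m.2 with h | h
  · refine ((hf m).2 h).trans ?_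
    rw [div_le_one (by have := one_le_sq m; linarith)]
    exact one_le_sq m
  · refine ((hf m).1 h).trans ?_
    rw [div_le_one (by exact_mod_cast h)]
    exact_mod_cast h

lemma KbP.sq_le {f : ι → ℝ} (hf : KbP f) (m : ι) :
    ‖f m‖ ^ (2 : ℝ≥0∞).toReal ≤ g m := by
  rw [rpow2]
  rcases lt_or_gt_of_ne m.2 with h | h
  · have h1 := (hf m).2 h
    have h2 := one_le_sq m
    have h3 : (0:ℝ) < (m.1 : ℝ) ^ 2 := by positivity
    have h4 : |f m| ^ 2 ≤ (1 / (m.1 : ℝ) ^ 2) ^ 2 := by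
      apply pow_le_pow_left₀ (abs_nonneg _) h1
    have h5 : f m ^ 2 = |f m| ^ 2 := (sq_abs _).symm
    rw [h5]
    refine h4.trans ?_
    rw [div_pow, one_pow, g]
    rw [div_le_div_iff₀ (by positivity) h3]
    nlinarith
  · have h1 := (hf m).1 h
    have h4 : |f m| ^ 2 ≤ (1 / (m.1 : ℝ)) ^ 2 :=
      pow_le_pow_left₀ (abs_nonneg _) h1 2
    have h5 : f m ^ 2 = |f m| ^ 2 := (sq_abs _).symm
    rw [h5, g]
    refine h4.trans ?_
    rw [div_pow, one_pow]

lemma KbP.memℓp {f : ι → ℝ} (hf : KbP f) : Memℓp f 2 :=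
  memℓp_gen (Summable.of_nonneg_of_le
    (fun m => Real.rpow_nonneg (norm_nonneg _) _) hf.sq_le g_summable)

/-- negation on the index set -/
def neg' (m : ι) : ι := ⟨-m.1, neg_ne_zero.mpr m.2⟩

@[simp] lemma neg'_val (m : ι) : (neg' m).1 = -m.1 := rfl

@[simp] lemma neg'_neg' (m : ι) : neg' (neg' m) = m := Subtype.ext (neg_neg _)

/-- the coefficient of the transformation `T` -/
noncomputable def σ (m : ι) : ℝ := if 0 < m.1 then (m.1 : ℝ) else -1 / (m.1 : ℝ)

lemma σ_pos {m : ι} (h : 0 < m.1) : σ m = (m.1 : ℝ) := if_pos h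

lemma σ_neg {m : ι} (h : m.1 < 0) : σ m = -1 / (m.1 : ℝ) := if_neg (by omega)

lemma σ_mul_σ_neg' (m : ι) : σ m * σ (neg' m) = 1 := by
  have hm : ((m.1 : ℝ)) ≠ 0 := by exact_mod_cast m.2
  rcases lt_or_gt_of_ne m.2 with h | h
  · rw [σ_neg h, σ_pos (show 0 < (neg' m).1 by simp only [neg'_val]; omega)]
    simp only [neg']
    push_cast
    field_simp
  · rw [σ_pos h, σ_neg (show (neg' m).1 < 0 by simp only [neg'_val]; omega)]
    simp only [neg']
    push_cast
    field_simp

/-- The coordinatewise transformation. -/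
noncomputable def Tf (f : ι → ℝ) : ι → ℝ := fun m => σ m * f (neg' m)

lemma KbP.Tf {f : ι → ℝ} (hf : KbP f) : KbP (Tf f) := by
  intro m
  have hm : ((m.1 : ℝ)) ≠ 0 := by exact_mod_cast m.2
  constructor
  · intro h
    have hmR : (0:ℝ) < (m.1 : ℝ) := by exact_mod_cast h
    have h1 : |f (neg' m)| ≤ 1 / ((neg' m).1 : ℝ) ^ 2 :=
      (hf (neg' m)).2 (by simp only [neg'_val]; omega)
    have h2 : ((neg' m).1 : ℝ) ^ 2 = (m.1 : ℝ) ^ 2 := by rw [neg'_val]; push_cast; ring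
    rw [h2] at h1
    have : |Aux18.Tf f m| = (m.1 : ℝ) * |f (neg' m)| := by
      rw [Aux18.Tf, abs_mul, σ_pos h, abs_of_pos hmR]
    rw [this]
    calc (m.1 : ℝ) * |f (neg' m)| ≤ (m.1 : ℝ) * (1 / (m.1 : ℝ) ^ 2) := by
          exact mul_le_mul_of_nonneg_left h1 hmR.le
      _ = 1 / (m.1 : ℝ) := by field_simp
  · intro h
    have hmR : ((m.1 : ℝ)) < 0 := by exact_mod_cast h
    have h1 : |f (neg' m)| ≤ 1 / ((neg' m).1 : ℝ) :=
      (hf (neg' m)).1 (by simp only [neg'_val]; omega)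
    have h2 : ((neg' m).1 : ℝ) = -(m.1 : ℝ) := by simp [neg']
    rw [h2] at h1
    have hpos : (0:ℝ) < -1 / (m.1 : ℝ) := by
      rw [neg_div]; exact neg_pos.mpr (one_div_neg.mpr hmR)
    have h3 : |Aux18.Tf f m| = (-1 / (m.1 : ℝ)) * |f (neg' m)| := by
      rw [Aux18.Tf, abs_mul, σ_neg h, abs_of_pos hpos]
    have h1' : |f (neg' m)| ≤ -1 / (m.1 : ℝ) := by
      rw [neg_div]; rw [div_neg] at h1; exact h1
    rw [h3]
    calc (-1 / (m.1 : ℝ)) * |f (neg' m)| ≤ (-1 / (m.1 : ℝ)) * (-1 / (m.1 : ℝ)) :=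
          mul_le_mul_of_nonneg_left h1' hpos.le
      _ = 1 / (m.1 : ℝ) ^ 2 := by ring


lemma coe_mk {f : ι → ℝ} (hf : Memℓp f 2) : ⇑(⟨f, hf⟩ : V18) = f := rfl

/-- The transformation `T` as a self-map of `K18`. -/
noncomputable def TK : K18 → K18 := fun x =>
  ⟨⟨Tf (⇑(x : V18)), (KbP.Tf x.2).memℓp⟩, KbP.Tf x.2⟩

lemma TK_apply (x : K18) (m : ι) : (TK x : V18) m = σ m * (x : V18) (neg' m) := rfl

lemma isT18_TK : IsT18 TK := by
  intro x n hn
  constructor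
  · show (TK x : V18) n = (n.1 : ℝ) * (x : V18) (neg' n)
    rw [TK_apply, σ_pos hn]
  · show (TK x : V18) (neg' n) = (x : V18) n / (n.1 : ℝ)
    have hneg : (neg' n).1 < 0 := by simp only [neg'_val]; omega
    rw [TK_apply, σ_neg hneg, neg'_neg', neg'_val]
    push_cast
    ring

lemma TK_invol (x : K18) : TK (TK x) = x := by
  apply Subtype.ext; apply lp.ext; funext m
  show σ m * (σ (neg' m) * (x : V18) (neg' (neg' m))) = (x : V18) m
  rw [neg'_neg', ← mul_assoc, σ_mul_σ_neg', one_mul]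

lemma convex_K18 : Convex ℝ K18 := by
  intro x hx y hy a b ha hb hab
  intro m
  have hx' := hx m
  have hy' := hy m
  have hco : ((a • x + b • y : V18)) m = a * x m + b * y m := by
    rfl
  have habs : |a * x m + b * y m| ≤ a * |x m| + b * |y m| := by
    refine (abs_add_le _ _).trans ?_
    rw [abs_mul, abs_mul, abs_of_nonneg ha, abs_of_nonneg hb]
  constructor <;> intro hm
  · have h1 := hx'.1 hm; have h2 := hy'.1 hm
    rw [hco]
    refine habs.trans ?_
    calc a * |x m| + b * |y m| ≤ a * (1 / (m.1:ℝ)) + b * (1 / (m.1:ℝ)) := by gcongr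
      _ = 1 / (m.1:ℝ) := by rw [← add_mul, hab, one_mul]
  · have h1 := hx'.2 hm; have h2 := hy'.2 hm
    rw [hco]
    refine habs.trans ?_
    calc a * |x m| + b * |y m| ≤ a * (1 / (m.1:ℝ)^2) + b * (1 / (m.1:ℝ)^2) := by gcongr
      _ = 1 / (m.1:ℝ)^2 := by rw [← add_mul, hab, one_mul]

lemma eval_continuous (m : ι) : Continuous fun x : V18 => x m := by
  have : LipschitzWith 1 fun x : V18 => x m := by
    apply LipschitzWith.of_dist_le_mul
    intro x y
    rw [NNReal.coe_one, one_mul, dist_eq_norm, dist_eq_norm]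
    have hc : x m - y m = (x - y) m := by rw [lp.coeFn_sub]; rfl
    rw [show ‖x m - y m‖ = ‖(x - y) m‖ by rw [hc]]
    exact lp.norm_apply_le_norm (by norm_num) (x - y) m
  exact this.continuous

lemma isClosed_K18 : IsClosed K18 := by
  have hK : K18 = ⋂ m : ι, {x : V18 |
      (0 < m.1 → |x m| ≤ 1 / (m.1 : ℝ)) ∧ (m.1 < 0 → |x m| ≤ 1 / (m.1 : ℝ) ^ 2)} := by
    ext x; simp only [K18, Set.mem_setOf_eq, Set.mem_iInter]
  rw [hK]
  refine isClosed_iInter fun m => ?_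
  have habs : Continuous fun x : V18 => |x m| := (eval_continuous m).abs
  rw [Set.setOf_and]
  refine IsClosed.inter ?_ ?_
  · by_cases hm : 0 < m.1
    · have : {x : V18 | 0 < m.1 → |x m| ≤ 1 / (m.1 : ℝ)} = {x : V18 | |x m| ≤ 1 / (m.1 : ℝ)} := by
        ext x; simp [hm]
      rw [this]
      exact isClosed_le habs continuous_const
    · have : {x : V18 | 0 < m.1 → |x m| ≤ 1 / (m.1 : ℝ)} = Set.univ := by
        ext x; simp [hm]
      rw [this]; exact isClosed_univ
  · by_cases hm : m.1 < 0
    · have : {x : V18 | m.1 < 0 → |x m| ≤ 1 / (m.1 : ℝ) ^ 2}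
          = {x : V18 | |x m| ≤ 1 / (m.1 : ℝ) ^ 2} := by
        ext x; simp [hm]
      rw [this]
      exact isClosed_le habs continuous_const
    · have : {x : V18 | m.1 < 0 → |x m| ≤ 1 / (m.1 : ℝ) ^ 2} = Set.univ := by
        ext x; simp [hm]
      rw [this]; exact isClosed_univ

lemma norm_sub_trunc_le {x : V18} (hx : x ∈ K18) (s : Finset ι) {ε : ℝ} (hε : 0 < ε)
    (hs : ∑' m : {m : ι // m ∉ s}, g m < ε ^ 2) :
    ‖x - ∑ i ∈ s, lp.single 2 i (x i)‖ ≤ ε := by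
  have hsum : Summable fun i => ‖x i‖ ^ (2 : ℝ≥0∞).toReal := (lp.memℓp x).summable hp2
  have hpow : ‖x - ∑ i ∈ s, lp.single 2 i (x i)‖ ^ (2 : ℝ≥0∞).toReal < ε ^ 2 := by
    rw [lp.norm_compl_sum_single hp2, lp.norm_rpow_eq_tsum hp2,
      ← hsum.sum_add_tsum_subtype_compl s, add_sub_cancel_left]
    refine lt_of_le_of_lt ?_ hs
    exact Summable.tsum_le_tsum (fun m => KbP.sq_le hx m.1) (hsum.subtype _) (g_summable.subtype _)
  have hconv : ‖x - ∑ i ∈ s, lp.single 2 i (x i)‖ ^ (2 : ℝ≥0∞).toReal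
      = ‖x - ∑ i ∈ s, lp.single 2 i (x i)‖ ^ (2 : ℕ) := by
    rw [show (2 : ℝ≥0∞).toReal = ((2 : ℕ) : ℝ) by norm_num, Real.rpow_natCast]
  rw [hconv] at hpow
  exact (lt_of_pow_lt_pow_left₀ 2 hε.le hpow).le

lemma totallyBounded_K18 : TotallyBounded K18 := by
  rw [Metric.totallyBounded_iff]
  intro ε hε
  have hε2 : (0:ℝ) < (ε / 2) ^ 2 := by positivity
  obtain ⟨s, hs⟩ : ∃ s : Finset ι, ∑' m : {m : ι // m ∉ s}, g m < (ε / 2) ^ 2 :=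
    ((tendsto_order.1 (tendsto_tsum_compl_atTop_zero g)).2 _ hε2).exists
  have hIcc : IsCompact (Set.pi Set.univ fun _ : ι => Set.Icc (-1:ℝ) 1) :=
    isCompact_univ_pi fun _ => isCompact_Icc
  set H : (ι → ℝ) → V18 := fun v => ∑ i ∈ s, lp.single 2 i (v i) with hH
  have hHcont : Continuous H := by
    apply continuous_finset_sum
    intro i _
    have heq : (fun v : ι → ℝ => lp.single 2 i (v i)) =
        fun v : ι → ℝ => (v i) • (lp.single 2 i (1:ℝ) : V18) := by
      funext v
      rw [← lp.single_smul, smul_eq_mul, mul_one]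
    rw [heq]
    exact (continuous_apply i).smul continuous_const
  have hN : IsCompact (H '' (Set.pi Set.univ fun _ : ι => Set.Icc (-1:ℝ) 1)) :=
    hIcc.image hHcont
  obtain ⟨t, htf, htsub⟩ := Metric.totallyBounded_iff.mp hN.totallyBounded (ε/2) (by positivity)
  refine ⟨t, htf, fun x hx => ?_⟩
  have hmem : (fun i : ι => x i) ∈ (Set.pi Set.univ fun _ : ι => Set.Icc (-1:ℝ) 1) := by
    intro i _
    have := KbP.abs_le_one hx i
    exact ⟨(abs_le.mp this).1, (abs_le.mp this).2⟩
  have hxt : H (fun i : ι => x i) ∈ H '' (Set.pi Set.univ fun _ : ι => Set.Icc (-1:ℝ) 1) :=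
    Set.mem_image_of_mem _ hmem
  obtain ⟨y, hyt, hy⟩ := Set.mem_iUnion₂.mp (htsub hxt)
  refine Set.mem_iUnion₂.mpr ⟨y, hyt, ?_⟩
  have h1 : dist x (H fun i : ι => x i) ≤ ε / 2 := by
    rw [dist_eq_norm]
    exact norm_sub_trunc_le hx s (by positivity) hs
  rw [Metric.mem_ball] at hy ⊢
  calc dist x y ≤ dist x (H fun i : ι => x i) + dist (H fun i : ι => x i) y :=
        dist_triangle _ _ _
    _ < ε / 2 + ε / 2 := add_lt_add_of_le_of_lt h1 hy
    _ = ε := by ring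

lemma isCompact_K18 : IsCompact K18 :=
  TotallyBounded.isCompact_of_isClosed totallyBounded_K18 isClosed_K18

lemma continuous_TK : Continuous TK := by
  have : CompactSpace K18 := isCompact_iff_compactSpace.mp isCompact_K18
  set e : K18 → (ι → ℝ) := fun x m => (x : V18) m with he
  have hec : Continuous e :=
    continuous_pi fun m => (eval_continuous m).comp continuous_subtype_val
  have hei : Function.Injective e := fun x y h =>
    Subtype.ext (lp.ext (funext fun m => congrFun h m))
  have hemb := hec.isClosedEmbedding hei
  rw [hemb.toIsEmbedding.continuous_iff]
  have hcomp : e ∘ TK = fun x m => σ m * e x (neg' m) := rfl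
  rw [hcomp]
  exact continuous_pi fun m => continuous_const.mul ((continuous_apply (neg' m)).comp hec)

lemma TK_affine (x y z : K18) (t : ℝ)
    (hz : (z : V18) = t • (x : V18) + (1 - t) • (y : V18)) :
    (TK z : V18) = t • (TK x : V18) + (1 - t) • (TK y : V18) := by
  apply lp.ext; funext m
  have hzc : ∀ k : ι, (z : V18) k = t * (x : V18) k + (1 - t) * (y : V18) k := by
    intro k
    rw [hz]
    rfl
  have hR : (↑(t • (TK x : V18) + (1 - t) • (TK y : V18)) : ι → ℝ) m
      = t * (TK x : V18) m + (1 - t) * (TK y : V18) m := by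
    rfl
  rw [hR, TK_apply, TK_apply, TK_apply, hzc (neg' m)]
  ring

lemma no_ext : ¬ ∃ L : V18 →L[ℝ] V18, ∀ x : K18, L (x : V18) = (TK x : V18) := by
  rintro ⟨L, hL⟩
  obtain ⟨N, hN⟩ := exists_nat_gt ‖L‖
  have hN0 : (0:ℝ) < (N:ℝ) := lt_of_le_of_lt (norm_nonneg L) hN
  have hNn : 0 < N := by exact_mod_cast hN0
  have hNz : (N:ℤ) ≠ 0 := Int.natCast_ne_zero.mpr hNn.ne' 
  set ip : ι := ⟨(N:ℤ), hNz⟩ with hip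
  set im : ι := ⟨-(N:ℤ), neg_ne_zero.mpr hNz⟩ with him
  set a : ℝ := 1 / (N:ℝ)^2 with ha
  set y : V18 := lp.single 2 im a with hy'
  have hy : y ∈ K18 := by
    intro m
    by_cases hm : m = im
    · subst hm
      have hval : y im = a := by rw [hy']; exact lp.single_apply_self (E := fun _ : ι => ℝ) 2 im a
      constructor
      · intro h
        exfalso
        have : (0:ℤ) < -(N:ℤ) := h
        omega
      · intro _
        rw [hval, abs_of_pos (by positivity : (0:ℝ) < a), ha]
        have : ((im.1 : ℤ) : ℝ) ^ 2 = (N:ℝ)^2 := by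
          rw [him]
          push_cast
          ring
        rw [this]
    · have hval : y m = 0 := by rw [hy']; exact lp.single_apply_ne (E := fun _ : ι => ℝ) 2 im a hm
      constructor
      · intro h
        rw [hval, abs_zero]
        have : (0:ℝ) < (m.1 : ℝ) := by exact_mod_cast h
        positivity
      · intro h
        rw [hval, abs_zero]
        have : ((m.1:ℝ)) ≠ 0 := by exact_mod_cast m.2
        positivity
  set yK : K18 := ⟨y, hy⟩ with hyK
  have hipos : (0:ℤ) < ip.1 := Int.natCast_pos.mpr hNn
  have h1 : (TK yK : V18) ip = 1 / (N:ℝ) := by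
    rw [TK_apply, σ_pos hipos]
    have hneg : neg' ip = im := rfl
    rw [hneg]
    show (N:ℝ) * y im = 1 / (N:ℝ)
    rw [hy', lp.single_apply_self, ha]
    field_simp
  have hyn : ‖y‖ = a := by
    have := lp.norm_single (E := fun _ : ι => ℝ) (p := 2) (by norm_num) im a
    rw [← hy'] at this
    rw [this, Real.norm_eq_abs, abs_of_pos (by positivity : (0:ℝ) < a)]
  have h2 : ‖(TK yK : V18)‖ ≤ ‖L‖ * a := by
    rw [← hL yK]
    calc ‖L y‖ ≤ ‖L‖ * ‖y‖ := L.le_opNorm y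
      _ = ‖L‖ * a := by rw [hyn]
  have h3 : 1 / (N:ℝ) ≤ ‖L‖ * a := by
    have hb := lp.norm_apply_le_norm (by norm_num : (2:ℝ≥0∞) ≠ 0) (TK yK : V18) ip
    rw [h1] at hb
    calc 1 / (N:ℝ) ≤ ‖(1:ℝ) / (N:ℝ)‖ := le_abs_self _
      _ ≤ ‖(TK yK : V18)‖ := hb
      _ ≤ ‖L‖ * a := h2
  have hfin : (N:ℝ) ≤ ‖L‖ := by
    have hm := mul_le_mul_of_nonneg_left h3 (by positivity : (0:ℝ) ≤ (N:ℝ)^2)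
    have e1 : (N:ℝ)^2 * (1 / (N:ℝ)) = (N:ℝ) := by field_simp
    have e2 : (N:ℝ)^2 * (‖L‖ * a) = ‖L‖ := by
      rw [ha, mul_comm ‖L‖ _, ← mul_assoc, mul_one_div,
        div_self (pow_ne_zero 2 hN0.ne'), one_mul]
    rw [e1, e2] at hm
    exact hm
  linarith

end Aux18


/-- `K18` is a compact convex subset of `V = ℓ²(ℤ∖{0})`, the map `T` given by
`(Tx)_n = n·x_{−n}`, `(Tx)_{−n} = x_n/n` (for `n > 0`) is a well-defined continuous
involution of `K18` preserving convex combinations, yet there is no continuous linear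
operator on `V` whose restriction to `K18` equals `T`. -/
theorem no_linear_extension_of_T :
    IsCompact K18 ∧ Convex ℝ K18 ∧
    ∃ T : K18 → K18, IsT18 T ∧
      Continuous T ∧
      (∀ x : K18, T (T x) = x) ∧
      (∀ (x y z : K18) (t : ℝ), 0 ≤ t → t ≤ 1 →
        (z : V18) = t • (x : V18) + (1 - t) • (y : V18) →
        (T z : V18) = t • (T x : V18) + (1 - t) • (T y : V18)) ∧
      ¬ ∃ L : V18 →L[ℝ] V18, ∀ x : K18, L (x : V18) = (T x : V18) :=
  ⟨Aux18.isCompact_K18, Aux18.convex_K18, Aux18.TK, Aux18.isT18_TK, Aux18.continuous_TK,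
    Aux18.TK_invol, fun x y z t _ _ h => Aux18.TK_affine x y z t h, Aux18.no_ext⟩
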